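/- Let G be an abelian group and define a group structure on G² × (G ∧ G) by (g₁,g₂;c)(h₁,h₂;d) = (g₁h₁, g₂h₂; c·d·(g₂ ∧ h₁)), where G ∧ G is the exterior square of G. This is a group (associativity and inverses hold), its center is {(a,b;c) : a,b ∈ Z^∧(G), c ∈ G ∧ G}, and the center is isomorphic to Z^∧(G)² × (G ∧ G). -/

import Mathlib

/-- Let `G` be an abelian group and `w : G × G → A` its exterior-square pairing
(bilinear, alternating, and universal among such pairings, so that `A = G ∧ G`).
Then the multiplication `(g₁,g₂;c)(h₁,h₂;d) = (g₁h₁, g₂h₂; c·d·(g₂ ∧ h₁))` on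
`G² × (G ∧ G)` is a group law, its center is
`{(a,b;c) : a,b ∈ Z^∧(G), c ∈ G ∧ G}` where `Z^∧(G) = {g : g ∧ x = 1 ∀x}`,
and the center is isomorphic (as a set, via a bijection) to
`Z^∧(G)² × (G ∧ G)`. -/
theorem stmt18 (G A : Type*) [CommGroup G] [CommGroup A]
    (w : G → G → A)
    (hbl : ∀ g g' h : G, w (g * g') h = w g h * w g' h)
    (hbr : ∀ g h h' : G, w g (h * h') = w g h * w g h')
    (halt : ∀ g : G, w g g = 1)
    (huniv : ∀ (B : Type) [CommGroup B] (f : G → G → B),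
      (∀ g g' h : G, f (g * g') h = f g h * f g' h) →
      (∀ g h h' : G, f g (h * h') = f g h * f g h') →
      (∀ g : G, f g g = 1) →
      ∃! φ : A →* B, ∀ g h : G, φ (w g h) = f g h) :
    ∃ m : (G × G × A) → (G × G × A) → (G × G × A),
      (∀ p q : G × G × A,
        m p q = (p.1 * q.1, p.2.1 * q.2.1, p.2.2 * q.2.2 * w p.2.1 q.1)) ∧
      (∀ p q r : G × G × A, m (m p q) r = m p (m q r)) ∧
      (∀ p : G × G × A, m (1, 1, 1) p = p ∧ m p (1, 1, 1) = p) ∧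
      (∀ p : G × G × A, ∃ q, m p q = (1, 1, 1) ∧ m q p = (1, 1, 1)) ∧
      ({p : G × G × A | ∀ q, m p q = m q p} =
        {p : G × G × A | (∀ x : G, w p.1 x = 1) ∧ (∀ x : G, w p.2.1 x = 1)}) ∧
      Nonempty
        ({p : G × G × A // ∀ q, m p q = m q p} ≃
          {g : G // ∀ x : G, w g x = 1} × {g : G // ∀ x : G, w g x = 1} × A) := by
  have hw1 : ∀ h : G, w 1 h = 1 := by
    intro h
    have := hbl 1 1 h
    simp only [one_mul] at this
    exact (left_eq_mul.mp this)
  have hw2 : ∀ g : G, w g 1 = 1 := by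
    intro g
    have := hbr g 1 1
    simp only [one_mul] at this
    exact (left_eq_mul.mp this)
  have hanti : ∀ g h : G, w g h * w h g = 1 := by
    intro g h
    have := halt (g * h)
    rw [hbl, hbr, hbr, halt, halt, one_mul, mul_one] at this
    exact this
  have hinvr : ∀ g h : G, w g h⁻¹ = (w g h)⁻¹ := by
    intro g h
    have := hbr g h h⁻¹
    rw [mul_inv_cancel, hw2] at this
    exact (inv_eq_of_mul_eq_one_right this.symm).symm
  have hinvl : ∀ g h : G, w g⁻¹ h = (w g h)⁻¹ := by
    intro g h
    have := hbl g g⁻¹ h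
    rw [mul_inv_cancel, hw1] at this
    exact (inv_eq_of_mul_eq_one_right this.symm).symm
  set m : (G × G × A) → (G × G × A) → (G × G × A) :=
    fun p q => (p.1 * q.1, p.2.1 * q.2.1, p.2.2 * q.2.2 * w p.2.1 q.1) with hm
  have hcenter : ({p : G × G × A | ∀ q, m p q = m q p} =
      {p : G × G × A | (∀ x : G, w p.1 x = 1) ∧ (∀ x : G, w p.2.1 x = 1)}) := by
    ext p
    simp only [Set.mem_setOf_eq, hm, Prod.mk.injEq]
    constructor
    · intro hp
      constructor
      · intro x
        have := (hp (1, x, 1)).2.2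
        simp only [hw2, mul_one, one_mul] at this
        have h2 : w x p.1 = 1 := mul_eq_left.mp this.symm
        have := hanti p.1 x
        rw [h2, mul_one] at this
        exact this
      · intro x
        have := (hp (x, 1, 1)).2.2
        simp only [hw1, mul_one, one_mul] at this
        exact mul_eq_left.mp this
    · intro ⟨h1, h2⟩ q
      refine ⟨mul_comm _ _, mul_comm _ _, ?_⟩
      rw [h2 q.1]
      have : w q.2.1 p.1 = 1 := by
        have := hanti p.1 q.2.1
        rw [h1 q.2.1, one_mul] at this
        exact this
      rw [this, mul_one, mul_one, mul_comm]
  refine ⟨m, fun p q => rfl, ?_, ?_, ?_, hcenter, ?_⟩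
  · intro p q r
    simp only [hm, Prod.mk.injEq]
    refine ⟨mul_assoc _ _ _, mul_assoc _ _ _, ?_⟩
    rw [hbr, hbl]
    simp [mul_assoc, mul_comm, mul_left_comm]
  · intro p
    simp [hm, hw1, hw2]
  · intro p
    refine ⟨(p.1⁻¹, p.2.1⁻¹, p.2.2⁻¹ * (w p.2.1 p.1⁻¹)⁻¹), ?_, ?_⟩ <;>
      simp only [hm, Prod.mk.injEq, mul_inv_cancel, inv_mul_cancel, hinvr, hinvl] <;>
      exact ⟨trivial, trivial, by simp [mul_assoc, mul_comm, mul_left_comm]⟩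
  · have key : ∀ p : G × G × A, (∀ q, m p q = m q p) ↔
        ((∀ x : G, w p.1 x = 1) ∧ (∀ x : G, w p.2.1 x = 1)) := by
      intro p
      exact Set.ext_iff.mp hcenter p
    exact ⟨{
      toFun := fun p => (⟨p.1.1, ((key p.1).mp p.2).1⟩, ⟨p.1.2.1, ((key p.1).mp p.2).2⟩,
        p.1.2.2)
      invFun := fun t => ⟨(t.1.1, t.2.1.1, t.2.2), (key _).mpr ⟨t.1.2, t.2.1.2⟩⟩
      left_inv := fun p => rfl
      right_inv := fun t => rfl }⟩
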